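/- Let K ⊆ {1, …, n} be a set of indices (the support set), let (vᵢ)_{i∈K} be independent real-valued random variables each of whose distribution (law) is atomless, and set vᵢ = 0 for i ∉ K. For subsets Mᵢ, Mⱼ ⊆ {1, …, n} and nonzero real weights, let cᵢ = ∑_{l∈Mᵢ} w_{li}·v_l and cⱼ = ∑_{l∈Mⱼ} w_{lj}·v_l. If Mᵢ ∩ K ≠ Mⱼ ∩ K, then ℙ[cᵢ = cⱼ] = 0. -/

import Mathlib

open MeasureTheory ProbabilityTheory

/-- If `f` and `g` are independent and the law of `g` is atomless, then
`f = g` has probability zero. -/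
lemma indep_eq_meas_zero {Ω : Type*} [MeasurableSpace Ω]
    (μ : Measure Ω) [IsProbabilityMeasure μ] {f g : Ω → ℝ}
    (hf : Measurable f) (hg : Measurable g)
    (h : IndepFun f g μ) (ha : ∀ c : ℝ, μ.map g {c} = 0) :
    μ {ω | f ω = g ω} = 0 := by
  have hd : MeasurableSet {p : ℝ × ℝ | p.1 = p.2} :=
    measurableSet_eq_fun measurable_fst measurable_snd
  have h1 : μ {ω | f ω = g ω}
      = μ.map (fun ω => (f ω, g ω)) {p : ℝ × ℝ | p.1 = p.2} := by
    rw [Measure.map_apply (hf.prodMk hg) hd]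
    rfl
  rw [h1,
    (indepFun_iff_map_prod_eq_prod_map_map hf.aemeasurable hg.aemeasurable).mp h,
    Measure.prod_apply hd]
  have h2 : ∀ x : ℝ, (μ.map g) (Prod.mk x ⁻¹' {p : ℝ × ℝ | p.1 = p.2}) = 0 := by
    intro x
    have : (Prod.mk x ⁻¹' {p : ℝ × ℝ | p.1 = p.2}) = {x} := by
      ext y; simp [eq_comm]
    rw [this]
    exact ha x
  simp only [h2]
  simp

/-- Theorem 1 / statement S1: two check node values whose neighborhoods have
different intersections with the support set `K` coincide with probability
zero. -/
theorem check_values_distinct_ae {Ω : Type*} [MeasurableSpace Ω]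
    (μ : Measure Ω) [IsProbabilityMeasure μ]
    (n : ℕ) (K : Finset (Fin n)) (v : Fin n → Ω → ℝ)
    (hmeas : ∀ l, Measurable (v l))
    (hindep : iIndepFun (fun l : K => v l) μ)
    (hatomless : ∀ l ∈ K, ∀ c : ℝ, μ.map (v l) {c} = 0)
    (hzero : ∀ l ∉ K, ∀ ω, v l ω = 0)
    (Mi Mj : Finset (Fin n)) (wi wj : Fin n → ℝ)
    (hwi : ∀ l ∈ Mi, wi l ≠ 0) (hwj : ∀ l ∈ Mj, wj l ≠ 0)
    (hne : Mi ∩ K ≠ Mj ∩ K) :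
    μ {ω | ∑ l ∈ Mi, wi l * v l ω = ∑ l ∈ Mj, wj l * v l ω} = 0 := by
  classical
  -- coefficients of the difference of the two check values
  set c : Fin n → ℝ := fun l =>
    (if l ∈ Mi then wi l else 0) - (if l ∈ Mj then wj l else 0) with hc
  -- rewrite each check value as a sum over `K`
  have hsum : ∀ (M : Finset (Fin n)) (w : Fin n → ℝ) (ω : Ω),
      ∑ l ∈ M, w l * v l ω = ∑ l ∈ K, (if l ∈ M then w l else 0) * v l ω := by
    intro M w ω
    have h1 : ∑ l ∈ K, (if l ∈ M then w l else 0) * v l ω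
        = ∑ l ∈ K.filter (· ∈ M), w l * v l ω := by
      rw [Finset.sum_filter]
      exact Finset.sum_congr rfl fun l _ => by split <;> simp
    rw [h1]
    refine (Finset.sum_subset ?_ ?_).symm
    · intro l hl
      exact (Finset.mem_filter.mp hl).2
    · intro l hl hl'
      have hlK : l ∉ K := fun h => hl' (Finset.mem_filter.mpr ⟨h, hl⟩)
      rw [hzero l hlK ω, mul_zero]
  -- find an index where the intersections differ
  have hex : ∃ l, ¬(l ∈ Mi ∩ K ↔ l ∈ Mj ∩ K) := by
    by_contra h
    push_neg at h
    exact hne (Finset.ext fun a => h a)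
  obtain ⟨l₀, hl₀⟩ := hex
  have hl₀K : l₀ ∈ K ∧ c l₀ ≠ 0 := by
    rcases not_iff.mp hl₀ |>.mp |> fun _ => (not_iff.mp hl₀) with h'
    by_cases h1 : l₀ ∈ Mi ∩ K
    · have h2 : l₀ ∉ Mj ∩ K := fun h => hl₀ ⟨fun _ => h, fun _ => h1⟩
      rcases Finset.mem_inter.mp h1 with ⟨hMi, hK⟩
      have hMj : l₀ ∉ Mj := fun h => h2 (Finset.mem_inter.mpr ⟨h, hK⟩)
      refine ⟨hK, ?_⟩
      simp only [hc, if_pos hMi, if_neg hMj, sub_zero]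
      exact hwi l₀ hMi
    · have h2 : l₀ ∈ Mj ∩ K := by
        by_contra h
        exact hl₀ ⟨fun h' => absurd h' h1, fun h' => absurd h' h⟩
      rcases Finset.mem_inter.mp h2 with ⟨hMj, hK⟩
      have hMi : l₀ ∉ Mi := fun h => h1 (Finset.mem_inter.mpr ⟨h, hK⟩)
      refine ⟨hK, ?_⟩
      simp only [hc, if_neg hMi, if_pos hMj, zero_sub, ne_eq, neg_eq_zero]
      exact hwj l₀ hMj
  obtain ⟨hK₀, hc₀⟩ := hl₀K
  set L₀ : K := ⟨l₀, hK₀⟩ with hL₀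
  -- the scaled family is independent
  set g : K → Ω → ℝ := fun l ω => c (l : Fin n) * v (l : Fin n) ω with hg
  have hgmeas : ∀ l : K, Measurable (g l) := fun l => (hmeas l).const_mul _
  have hgindep : iIndepFun g μ := by
    have := hindep.comp (fun l : K => fun x : ℝ => c (l : Fin n) * x)
      (fun l => measurable_const_mul _)
    exact this
  -- the sum over the rest is independent of `g L₀`
  set S : Ω → ℝ := fun ω => ∑ l ∈ Finset.univ.erase L₀, g l ω with hS
  have hSmeas : Measurable S := by
    apply Finset.measurable_sum
    intro l _
    exact hgmeas l
  have hindepS : IndepFun S (g L₀) μ := by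
    have h := hgindep.indepFun_finsetSum_of_notMem hgmeas
      (s := Finset.univ.erase L₀) (i := L₀) (Finset.notMem_erase _ _)
    have heq : (∑ j ∈ Finset.univ.erase L₀, g j) = S := by
      funext ω; simp [hS, Finset.sum_apply]
    rwa [heq] at h
  have hindepS' : IndepFun S (fun ω => -(g L₀ ω)) μ := hindepS.neg_right
  -- law of `-(g L₀)` is atomless
  have hatom' : ∀ r : ℝ, μ.map (fun ω => -(g L₀ ω)) {r} = 0 := by
    intro r
    have hm : Measurable fun ω => -(g L₀ ω) := (hgmeas L₀).neg
    rw [Measure.map_apply hm (measurableSet_singleton r)]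
    have hpre : (fun ω => -(g L₀ ω)) ⁻¹' {r} = v l₀ ⁻¹' {(-r) / c l₀} := by
      ext ω
      simp only [Set.mem_preimage, Set.mem_singleton_iff, hg]
      constructor
      · intro h
        field_simp
        linarith [h]
      · intro h
        have : v l₀ ω = (-r) / c l₀ := h
        rw [this]
        field_simp
        exact mul_comm _ _
    rw [hpre, ← Measure.map_apply (hmeas l₀) (measurableSet_singleton _)]
    exact hatomless l₀ hK₀ _
  -- rewrite the event
  have hset : {ω | ∑ l ∈ Mi, wi l * v l ω = ∑ l ∈ Mj, wj l * v l ω}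
      = {ω | S ω = -(g L₀ ω)} := by
    ext ω
    simp only [Set.mem_setOf_eq]
    rw [hsum Mi wi ω, hsum Mj wj ω]
    have hKsum : ∑ l ∈ K, (if l ∈ Mi then wi l else 0) * v l ω
        - ∑ l ∈ K, (if l ∈ Mj then wj l else 0) * v l ω
        = ∑ l : K, g l ω := by
      rw [← Finset.sum_sub_distrib]
      rw [← Finset.sum_attach K fun l => ((if l ∈ Mi then wi l else 0) * v l ω
        - (if l ∈ Mj then wj l else 0) * v l ω)]
      apply Finset.sum_congr rfl
      intro l _
      simp only [hg, hc]
      ring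
    constructor
    · intro h
      have h0 : ∑ l : K, g l ω = 0 := by rw [← hKsum]; linarith
      have hsplit := Finset.add_sum_erase Finset.univ (fun l => g l ω)
        (Finset.mem_univ L₀)
      simp only [hS]
      linarith
    · intro h
      have hsplit := Finset.add_sum_erase Finset.univ (fun l => g l ω)
        (Finset.mem_univ L₀)
      have h0 : ∑ l : K, g l ω = 0 := by
        simp only [hS] at h; linarith
      rw [← hKsum] at h0
      linarith
  rw [hset]
  exact indep_eq_meas_zero μ hSmeas ((hgmeas L₀).neg) hindepS' hatom'
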